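/- Let U_1, …, U_m be nonempty closed convex subsets of R^n with nonempty intersection U. Let (x_k) be the sequence generated by the Parallel Polyhedral Projection Method: x_{k+1} = P_{Ω_k}(x_k) where Ω_k = ∩_i {z : ⟨x_k − P_{U_i}(x_k), z − P_{U_i}(x_k)⟩ ≤ 0}. Then max_{1≤i≤m} dist(x_k, U_i) → 0 as k → ∞. -/

import Mathlib

open Metric Filter Topology

/-- `p` is the metric projection of `z` onto `X`. -/
def IsProj {n : ℕ} (X : Set (EuclideanSpace ℝ (Fin n))) (z p : EuclideanSpace ℝ (Fin n)) : Prop :=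
  p ∈ X ∧ ∀ y ∈ X, dist z p ≤ dist z y

lemma isProj_inner_le {n : ℕ} {K : Set (EuclideanSpace ℝ (Fin n))} (hK : Convex ℝ K)
    {z q : EuclideanSpace ℝ (Fin n)} (h : IsProj K z q) :
    ∀ w ∈ K, inner ℝ (z - q) (w - q) ≤ (0 : ℝ) := by
  haveI : Nonempty K := ⟨⟨q, h.1⟩⟩
  have hnorm : ‖z - q‖ = ⨅ w : K, ‖z - w‖ := by
    apply le_antisymm
    · apply le_ciInf
      intro w
      rw [← dist_eq_norm, ← dist_eq_norm]
      exact h.2 w w.2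
    · exact ciInf_le ⟨0, by rintro r ⟨w, rfl⟩; positivity⟩ (⟨q, h.1⟩ : K)
  exact (norm_eq_iInf_iff_real_inner_le_zero hK h.1).mp hnorm

lemma isProj_infDist {n : ℕ} {K : Set (EuclideanSpace ℝ (Fin n))}
    {z q : EuclideanSpace ℝ (Fin n)} (h : IsProj K z q) :
    Metric.infDist z K = dist z q :=
by
  refine le_antisymm (Metric.infDist_le_dist_of_mem h.1) ?_
  by_contra hlt
  push_neg at hlt
  obtain ⟨y, hy, hylt⟩ := (Metric.infDist_lt_iff ⟨q, h.1⟩).mp hlt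
  exact absurd (h.2 y hy) (not_le.mpr hylt)

/-- Vanishing distance to the individual sets along the 3PM sequence. -/
theorem stmt3 {n m : ℕ} (hm : 0 < m) (U : Fin m → Set (EuclideanSpace ℝ (Fin n)))
    (hne : ∀ i, (U i).Nonempty) (hcl : ∀ i, IsClosed (U i)) (hcv : ∀ i, Convex ℝ (U i))
    (hU : (⋂ i, U i).Nonempty)
    (x : ℕ → EuclideanSpace ℝ (Fin n)) (p : ℕ → Fin m → EuclideanSpace ℝ (Fin n))
    (hp : ∀ k i, IsProj (U i) (x k) (p k i))
    (hstep : ∀ k, IsProj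
      (⋂ i, {z : EuclideanSpace ℝ (Fin n) | inner ℝ (x k - p k i) (z - p k i) ≤ (0 : ℝ)})
      (x k) (x (k + 1))) :
    Tendsto (fun k => ⨆ i : Fin m, Metric.infDist (x k) (U i)) atTop (nhds 0) := by
  haveI : Nonempty (Fin m) := ⟨⟨0, hm⟩⟩
  obtain ⟨u, hu⟩ := hU
  set Ω : ℕ → Set (EuclideanSpace ℝ (Fin n)) := fun k =>
    ⋂ i, {z : EuclideanSpace ℝ (Fin n) | inner ℝ (x k - p k i) (z - p k i) ≤ (0 : ℝ)} with hΩ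
  -- u ∈ Ω k
  have huΩ : ∀ k, u ∈ Ω k := by
    intro k
    refine Set.mem_iInter.mpr fun i => ?_
    exact isProj_inner_le (hcv i) (hp k i) u (Set.mem_iInter.mp hu i)
  -- Ω k convex
  have hΩconv : ∀ k, Convex ℝ (Ω k) := by
    intro k
    refine convex_iInter fun i => ?_
    have hlin : IsLinearMap ℝ (fun z : EuclideanSpace ℝ (Fin n) => (inner ℝ (x k - p k i) z : ℝ)) :=
      ⟨fun a b => inner_add_right _ _ _, fun c a => real_inner_smul_right _ _ _⟩
    have : {z : EuclideanSpace ℝ (Fin n) | inner ℝ (x k - p k i) (z - p k i) ≤ (0 : ℝ)} =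
        {z : EuclideanSpace ℝ (Fin n) |
          (inner ℝ (x k - p k i) z : ℝ) ≤ inner ℝ (x k - p k i) (p k i)} := by
      ext z
      simp [inner_sub_right, sub_nonpos]
    rw [this]
    exact convex_halfSpace_le hlin _
  -- distance to each U i bounded by step length
  have hdb : ∀ k i, dist (x k) (p k i) ≤ dist (x k) (x (k + 1)) := by
    intro k i
    have hmem : (inner ℝ (x k - p k i) (x (k + 1) - p k i) : ℝ) ≤ 0 :=
      Set.mem_iInter.mp (hstep k).1 i
    set v := x k - p k i with hv
    have hsplit : (x k - x (k + 1)) + (x (k + 1) - p k i) = v := by rw [hv]; abel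
    have h1 : ‖v‖ ^ 2 ≤ (inner ℝ v (x k - x (k + 1)) : ℝ) := by
      have : (inner ℝ v v : ℝ) =
          inner ℝ v (x k - x (k + 1)) + inner ℝ v (x (k + 1) - p k i) := by
        rw [← inner_add_right, hsplit]
      nlinarith [real_inner_self_eq_norm_sq v]
    have h2 : (inner ℝ v (x k - x (k + 1)) : ℝ) ≤ ‖v‖ * ‖x k - x (k + 1)‖ :=
      real_inner_le_norm _ _
    rw [dist_eq_norm, dist_eq_norm]
    nlinarith [norm_nonneg v, norm_nonneg (x k - x (k + 1))]
  -- Fejér: step length squared bounded by decrease of b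
  set b : ℕ → ℝ := fun k => ‖x k - u‖ ^ 2 with hb
  have key : ∀ k, dist (x k) (x (k + 1)) ^ 2 ≤ b k - b (k + 1) := by
    intro k
    have hvi : (inner ℝ (x k - x (k + 1)) (u - x (k + 1)) : ℝ) ≤ 0 :=
      isProj_inner_le (hΩconv k) (hstep k) u (huΩ k)
    have hdecomp : ‖x k - u‖ ^ 2 = ‖(x k - x (k + 1)) + (x (k + 1) - u)‖ ^ 2 := by
      congr 1
      congr 1
      abel
    have hexp := norm_add_sq_real (x k - x (k + 1)) (x (k + 1) - u)
    have hneg : (inner ℝ (x k - x (k + 1)) (x (k + 1) - u) : ℝ) =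
        -(inner ℝ (x k - x (k + 1)) (u - x (k + 1)) : ℝ) := by
      rw [← inner_neg_right]
      congr 1
      abel
    rw [dist_eq_norm]
    simp only [hb]
    nlinarith [hexp, hdecomp]
  have hb_nonneg : ∀ k, (0 : ℝ) ≤ b k := fun k => sq_nonneg _
  have hb_anti : Antitone b := by
    apply antitone_nat_of_succ_le
    intro k
    nlinarith [key k, sq_nonneg (dist (x k) (x (k + 1)))]
  have hbL : Tendsto b atTop (nhds (⨅ k, b k)) :=
    tendsto_atTop_ciInf hb_anti ⟨0, by rintro r ⟨k, rfl⟩; exact hb_nonneg k⟩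
  have hb' : Tendsto (fun k => b (k + 1)) atTop (nhds (⨅ k, b k)) :=
    hbL.comp (tendsto_add_atTop_nat 1)
  have hdiff : Tendsto (fun k => b k - b (k + 1)) atTop (nhds 0) := by
    have := hbL.sub hb'
    simpa using this
  have hd2 : Tendsto (fun k => dist (x k) (x (k + 1)) ^ 2) atTop (nhds 0) :=
    squeeze_zero (fun k => sq_nonneg _) key hdiff
  have hd : Tendsto (fun k => dist (x k) (x (k + 1))) atTop (nhds 0) := by
    have h := (Real.continuous_sqrt.tendsto 0).comp hd2
    have heq : (fun k => Real.sqrt (dist (x k) (x (k + 1)) ^ 2)) =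
        fun k => dist (x k) (x (k + 1)) := by
      funext k
      exact Real.sqrt_sq dist_nonneg
    rw [Function.comp_def, heq] at h
    simpa using h
  refine squeeze_zero (fun k => Real.iSup_nonneg fun i => Metric.infDist_nonneg)
    (fun k => ciSup_le fun i => ?_) hd
  rw [isProj_infDist (hp k i)]
  exact hdb k i
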